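/- For 1 < α < 2 and θ ∈ (0,π), the real part of g_α(θ) = -e^{-iθ}(1-e^{iθ})^α satisfies Re(g_α(θ)) = -(2 sin(θ/2))^α cos((α/2)(π-θ)+θ), and there holds |Im(g_α(θ))/Re(g_α(θ))| ≤ |tan(απ/2)|, with the supremum over θ ∈ (0,π) equal to |tan(απ/2)|. -/

import Mathlib

open Real Complex

lemma polar (θ : ℝ) :
    (1 : ℂ) - Complex.exp ((θ : ℂ) * Complex.I) =
      (2 * Real.sin (θ/2) : ℝ) * (Real.cos ((θ-π)/2) + Real.sin ((θ-π)/2) * Complex.I) := by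
  have hc : Real.cos ((θ-π)/2) = Real.sin (θ/2) := by
    rw [show (θ-π)/2 = θ/2 - π/2 by ring, Real.cos_sub, Real.cos_pi_div_two, Real.sin_pi_div_two]
    ring
  have hs : Real.sin ((θ-π)/2) = -Real.cos (θ/2) := by
    rw [show (θ-π)/2 = θ/2 - π/2 by ring, Real.sin_sub, Real.cos_pi_div_two, Real.sin_pi_div_two]
    ring
  have h1 : Real.cos θ = 1 - 2 * Real.sin (θ/2)^2 := by
    have h := Real.cos_sq (θ/2)
    have := Real.sin_sq_add_cos_sq (θ/2)
    have h2 : 2 * (θ/2) = θ := by ring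
    rw [h2] at h
    nlinarith
  have h2 : Real.sin θ = 2 * Real.sin (θ/2) * Real.cos (θ/2) := by
    rw [show θ = 2 * (θ/2) by ring, Real.sin_two_mul]
    ring_nf
  rw [hc, hs]
  apply Complex.ext <;>
    simp only [Complex.sub_re, Complex.sub_im, Complex.one_re, Complex.one_im,
      Complex.exp_ofReal_mul_I_re, Complex.exp_ofReal_mul_I_im, Complex.mul_re, Complex.mul_im,
      Complex.add_re, Complex.add_im, Complex.ofReal_re, Complex.ofReal_im, Complex.I_re,
      Complex.I_im, h1, h2] <;> ring

lemma g_form (α θ : ℝ) (hθ : θ ∈ Set.Ioo (0:ℝ) π) :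
    -(Complex.exp (-(θ : ℂ) * Complex.I)) * (1 - Complex.exp ((θ : ℂ) * Complex.I)) ^ (α : ℂ)
      = ((2 * Real.sin (θ/2)) ^ α : ℝ) *
        (-(Complex.exp ((α * ((θ-π)/2) - θ : ℝ) * Complex.I))) := by
  obtain ⟨h0, hπ⟩ := hθ
  set r : ℝ := 2 * Real.sin (θ/2) with hr
  set φ : ℝ := (θ-π)/2 with hφ
  have hrpos : 0 < r := by
    have : 0 < Real.sin (θ/2) := Real.sin_pos_of_pos_of_lt_pi (by linarith)
      (by linarith [Real.pi_pos])
    positivity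
  have hφmem : φ ∈ Set.Ioc (-π) π := by
    constructor <;> simp only [hφ] <;> nlinarith [Real.pi_pos]
  have hz : (1 : ℂ) - Complex.exp ((θ : ℂ) * Complex.I)
      = (r : ℂ) * (Complex.cos (φ:ℂ) + Complex.sin (φ:ℂ) * Complex.I) := by
    rw [polar θ, Complex.ofReal_cos, Complex.ofReal_sin]
  have habs : ‖(1 : ℂ) - Complex.exp ((θ : ℂ) * Complex.I)‖ = r := by
    rw [hz, norm_mul, Complex.norm_real, Real.norm_eq_abs, Complex.norm_cos_add_sin_mul_I,
      abs_of_pos hrpos, mul_one]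
  have harg : Complex.arg ((1 : ℂ) - Complex.exp ((θ : ℂ) * Complex.I)) = φ := by
    rw [hz]; exact Complex.arg_mul_cos_add_sin_mul_I hrpos hφmem
  have hzne : (1 : ℂ) - Complex.exp ((θ : ℂ) * Complex.I) ≠ 0 := by
    intro h
    rw [h] at habs
    simp at habs
    linarith
  have hlog : Complex.log ((1 : ℂ) - Complex.exp ((θ : ℂ) * Complex.I))
      = (Real.log r : ℂ) + (φ : ℂ) * Complex.I := by
    apply Complex.ext
    · simp [Complex.log_re, habs]
    · simp [Complex.log_im, harg]
  rw [Complex.cpow_def_of_ne_zero hzne, hlog]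
  have hexp : Complex.exp (((Real.log r : ℂ) + (φ:ℂ) * Complex.I) * (α:ℂ))
      = (r ^ α : ℝ) * Complex.exp ((α * φ : ℝ) * Complex.I) := by
    rw [Real.rpow_def_of_pos hrpos, show ((Real.log r : ℂ) + (φ:ℂ) * Complex.I) * (α:ℂ)
      = (Real.log r * α : ℝ) + ((α * φ : ℝ)) * Complex.I by push_cast; ring,
      Complex.exp_add, Complex.ofReal_exp]
  rw [hexp]
  rw [show (α * ((θ-π)/2) - θ : ℝ) = (α * φ) + (-θ) by rw [hφ]; ring, Complex.ofReal_add,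
    add_mul, Complex.exp_add]
  push_cast
  ring

lemma g_re_im (α θ : ℝ) (hθ : θ ∈ Set.Ioo (0:ℝ) π) :
    (-(Complex.exp (-(θ : ℂ) * Complex.I)) * (1 - Complex.exp ((θ : ℂ) * Complex.I)) ^ (α : ℂ)).re
      = -(2 * Real.sin (θ / 2)) ^ α * Real.cos ((α / 2) * (π - θ) + θ) ∧
    (-(Complex.exp (-(θ : ℂ) * Complex.I)) * (1 - Complex.exp ((θ : ℂ) * Complex.I)) ^ (α : ℂ)).im
      = (2 * Real.sin (θ / 2)) ^ α * Real.sin ((α / 2) * (π - θ) + θ) := by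
  rw [g_form α θ hθ]
  have hx : (α * ((θ-π)/2) - θ : ℝ) = -((α / 2) * (π - θ) + θ) := by ring
  rw [hx]
  simp only [Complex.re_ofReal_mul, Complex.im_ofReal_mul, Complex.neg_re, Complex.neg_im,
    Complex.exp_ofReal_mul_I_re, Complex.exp_ofReal_mul_I_im, Real.cos_neg, Real.sin_neg]
  constructor <;> ring

lemma ratio_eq (α : ℝ) (hα : 1 < α ∧ α < 2) (θ : ℝ) (hθ : θ ∈ Set.Ioo (0:ℝ) π) :
    |(-(Complex.exp (-(θ : ℂ) * Complex.I)) *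
        (1 - Complex.exp ((θ : ℂ) * Complex.I)) ^ (α : ℂ)).im /
      (-(Complex.exp (-(θ : ℂ) * Complex.I)) *
        (1 - Complex.exp ((θ : ℂ) * Complex.I)) ^ (α : ℂ)).re|
    = -Real.tan ((α / 2) * (π - θ) + θ - π) := by
  obtain ⟨hre, him⟩ := g_re_im α θ hθ
  obtain ⟨hα1, hα2⟩ := hα
  obtain ⟨h0, hπ⟩ := hθ
  have hpi := Real.pi_pos
  set ψ : ℝ := (α / 2) * (π - θ) + θ with hψ
  set t : ℝ := ψ - π with ht
  have ht1 : -(π/2) < t := by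
    have : α * π / 2 - π < t := by
      simp only [ht, hψ]; nlinarith
    nlinarith
  have ht2 : t < 0 := by simp only [ht, hψ]; nlinarith
  have hcos : Real.cos ψ = -Real.cos t := by
    rw [show ψ = t + π by simp [ht]]; simp [Real.cos_add]
  have hsin : Real.sin ψ = -Real.sin t := by
    rw [show ψ = t + π by simp [ht]]; simp [Real.sin_add]
  have hcost : 0 < Real.cos t := Real.cos_pos_of_mem_Ioo ⟨ht1, by linarith⟩
  have hrpos : (0:ℝ) < (2 * Real.sin (θ / 2)) ^ α := by
    have : 0 < Real.sin (θ/2) := Real.sin_pos_of_pos_of_lt_pi (by linarith) (by linarith)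
    positivity
  rw [hre, him, hcos, hsin]
  have key : (2 * Real.sin (θ / 2)) ^ α * -Real.sin t /
      (-(2 * Real.sin (θ / 2)) ^ α * -Real.cos t) = -(Real.sin t / Real.cos t) := by
    have hR := hrpos.ne'
    have hc := hcost.ne'
    field_simp
  rw [key, ← Real.tan_eq_sin_div_cos]
  have hts : Real.sin t < 0 := Real.sin_neg_of_neg_of_neg_pi_lt ht2 (by linarith)
  have htn : Real.tan t < 0 := by
    rw [Real.tan_eq_sin_div_cos]; exact div_neg_of_neg_of_pos hts hcost
  rw [_root_.abs_of_nonneg (by linarith)]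


theorem im_re_ratio_bound (α : ℝ) (hα : 1 < α ∧ α < 2)
    (g : ℝ → ℂ)
    (hg : ∀ θ : ℝ, g θ =
      -(Complex.exp (-(θ : ℂ) * Complex.I)) * (1 - Complex.exp ((θ : ℂ) * Complex.I)) ^ (α : ℂ)) :
    (∀ θ ∈ Set.Ioo (0 : ℝ) π,
        (g θ).re = -(2 * Real.sin (θ / 2)) ^ α * Real.cos ((α / 2) * (π - θ) + θ) ∧
        |(g θ).im / (g θ).re| ≤ |Real.tan (α * π / 2)|) ∧
      sSup ((fun θ => |(g θ).im / (g θ).re|) '' Set.Ioo (0 : ℝ) π) = |Real.tan (α * π / 2)| := by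
  obtain ⟨hα1, hα2⟩ := hα
  have hpi := Real.pi_pos
  set t₀ : ℝ := α * π / 2 - π with ht₀
  have ht₀1 : -(π/2) < t₀ := by simp only [ht₀]; nlinarith
  have ht₀2 : t₀ < 0 := by simp only [ht₀]; nlinarith
  have htan0 : Real.tan t₀ < 0 := Real.tan_neg_of_neg_of_pi_div_two_lt ht₀2 ht₀1
  have hM : |Real.tan (α * π / 2)| = -Real.tan t₀ := by
    have hper := Real.tan_periodic t₀
    rw [show t₀ + π = α * π / 2 by simp only [ht₀]; ring] at hper
    rw [hper, abs_of_neg htan0]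
  -- the pointwise bound
  have hbd : ∀ θ ∈ Set.Ioo (0 : ℝ) π,
      |(g θ).im / (g θ).re| ≤ |Real.tan (α * π / 2)| := by
    intro θ hθ
    rw [hg θ, ratio_eq α ⟨hα1, hα2⟩ θ hθ, hM]
    obtain ⟨h0, hπ'⟩ := hθ
    have h1 : t₀ < (α / 2) * (π - θ) + θ - π := by simp only [ht₀]; nlinarith
    have h2 : (α / 2) * (π - θ) + θ - π < π/2 := by nlinarith
    have := Real.tan_lt_tan_of_lt_of_lt_pi_div_two ht₀1 h2 h1
    linarith
  refine ⟨fun θ hθ => ⟨by rw [hg θ]; exact (g_re_im α θ hθ).1, hbd θ hθ⟩, ?_⟩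
  -- supremum
  apply csSup_eq_of_forall_le_of_forall_lt_exists_gt
  · have hmem : (π/2 : ℝ) ∈ Set.Ioo (0:ℝ) π := ⟨by linarith, by linarith⟩
    exact ⟨_, Set.mem_image_of_mem _ hmem⟩
  · rintro x ⟨θ, hθ, rfl⟩
    exact hbd θ hθ
  · intro w hw
    set f : ℝ → ℝ := fun θ => -Real.tan ((α / 2) * (π - θ) + θ - π) with hf
    have harg : (α / 2) * (π - (0:ℝ)) + 0 - π = t₀ := by simp only [ht₀]; ring
    have hf0 : f 0 = |Real.tan (α * π / 2)| := by
      show -Real.tan ((α / 2) * (π - (0:ℝ)) + 0 - π) = _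
      rw [harg, hM]
    have hc1 : ContinuousAt Real.tan t₀ :=
      Real.continuousAt_tan.2 (Real.cos_pos_of_mem_Ioo ⟨ht₀1, ht₀2.trans (by positivity)⟩).ne'
    have hc2 : ContinuousAt (fun θ : ℝ => (α / 2) * (π - θ) + θ - π) 0 := by fun_prop
    have hcont : ContinuousAt f 0 := by
      have hcomp : ContinuousAt (Real.tan ∘ fun θ : ℝ => (α / 2) * (π - θ) + θ - π) 0 :=
        ContinuousAt.comp (by rw [harg]; exact hc1) hc2
      exact hcomp.neg
    have htend : Filter.Tendsto f (nhdsWithin 0 (Set.Ioi 0)) (nhds (|Real.tan (α * π / 2)|)) := by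
      rw [← hf0]
      exact (hcont.continuousWithinAt).tendsto
    have hev1 : ∀ᶠ θ in nhdsWithin 0 (Set.Ioi 0), w < f θ :=
      htend.eventually (eventually_gt_nhds hw)
    have hev2 : ∀ᶠ θ in nhdsWithin 0 (Set.Ioi 0), θ ∈ Set.Ioo (0:ℝ) π := by
      have hmem : Set.Iio π ∈ nhdsWithin (0:ℝ) (Set.Ioi 0) :=
        nhdsWithin_le_nhds (Iio_mem_nhds hpi)
      filter_upwards [hmem, self_mem_nhdsWithin] with θ h1 h2
      exact ⟨h2, h1⟩
    obtain ⟨θ, hwθ, hθmem⟩ := (hev1.and hev2).exists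
    refine ⟨|(g θ).im / (g θ).re|, Set.mem_image_of_mem _ hθmem, ?_⟩
    rw [hg θ, ratio_eq α ⟨hα1, hα2⟩ θ hθmem]
    exact hwθ
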